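/- Counting lemma for 2-dimensional matrices: For any δ > 0, any integers t, s ≥ 1, any finite alphabet Σ, any t × s matrix C = (c_{i,j}) over Σ, and any reals ρ_{i,j} ∈ (0,1] (1 ≤ i ≤ t, 1 ≤ j ≤ s), there exists ε > 0 such that the following holds. Let A be a 2-dimensional matrix over Σ whose rows are partitioned into sets R_1,…,R_t with |R_i| = m_i and whose columns are partitioned into sets S_1,…,S_s with |S_j| = n_j, and suppose that every block B_{i,j} = R_i × S_j of A is ε-regular and has density of the symbol c_{i,j} equal to ρ_{i,j}. Then the number of tuples (r_1,…,r_t, s_1,…,s_s) with r_i ∈ R_i, s_j ∈ S_j, and a_{r_i, s_j} = c_{i,j} for all i, j is at least (1 − δ) · ∏_{i=1}^t m_i · ∏_{j=1}^s n_j · ∏_{i=1}^t ∏_{j=1}^s ρ_{i,j}. -/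

import Mathlib

/-
STATEMENT 6: Counting lemma for 2-dimensional matrices: for any δ > 0, t, s ≥ 1, finite
alphabet Σ, t × s matrix C over Σ and densities ρ_{i,j} ∈ (0,1], there is ε > 0 such
that: whenever the rows of a matrix A are partitioned into R_1,…,R_t and its columns
into S_1,…,S_s and every block R_i × S_j is ε-regular with density of c_{i,j} equal to
ρ_{i,j}, the number of aligned appearances of C in A is at least
(1 − δ)·∏ m_i·∏ n_j·∏∏ ρ_{i,j}.
-/

open Finset

noncomputable section
open scoped Classical

/-- The weight of the symbol `σ` in the block `S₁ × S₂` of the 2-dimensional matrix `A`. -/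
def blockWeight2 {m n : ℕ} {T : Type*} [DecidableEq T] (A : Fin m → Fin n → T)
    (S1 : Finset (Fin m)) (S2 : Finset (Fin n)) (σ : T) : ℕ :=
  ((S1 ×ˢ S2).filter fun q => A q.1 q.2 = σ).card

/-- The density `ρ_σ` of the symbol `σ` in the block `S₁ × S₂` of `A`. -/
def blockDensity2 {m n : ℕ} {T : Type*} [DecidableEq T] (A : Fin m → Fin n → T)
    (S1 : Finset (Fin m)) (S2 : Finset (Fin n)) (σ : T) : ℝ :=
  (blockWeight2 A S1 S2 σ : ℝ) / ((S1.card : ℝ) * (S2.card : ℝ))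

/-- The block `S₁ × S₂` of `A` is `ε`-regular if for every symbol `σ` and every
sub-block `T₁ × T₂` with `T₁ ⊆ S₁`, `T₂ ⊆ S₂`, `|T₁| ≥ ε·|S₁|` and `|T₂| ≥ ε·|S₂|`,
one has `|ρ_σ(T₁ × T₂) − ρ_σ(S₁ × S₂)| ≤ ε`.  Applied with `S₁ = S₂ = univ`, this says
that the matrix `A` itself is `ε`-regular. -/
def IsRegularBlock2 {m n : ℕ} {T : Type*} [DecidableEq T] (ε : ℝ)
    (A : Fin m → Fin n → T) (S1 : Finset (Fin m)) (S2 : Finset (Fin n)) : Prop :=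
  ∀ (σ : T) (T1 : Finset (Fin m)) (T2 : Finset (Fin n)), T1 ⊆ S1 → T2 ⊆ S2 →
    ε * (S1.card : ℝ) ≤ (T1.card : ℝ) → ε * (S2.card : ℝ) ≤ (T2.card : ℝ) →
    |blockDensity2 A T1 T2 σ - blockDensity2 A S1 S2 σ| ≤ ε

lemma blockWeight2_eq_sum {m n : ℕ} {T : Type*} [DecidableEq T] (A : Fin m → Fin n → T)
    (S1 : Finset (Fin m)) (S2 : Finset (Fin n)) (σ : T) :
    blockWeight2 A S1 S2 σ = ∑ x ∈ S1, ((S2.filter fun y => A x y = σ).card) := by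
  unfold blockWeight2
  rw [Finset.card_filter, Finset.sum_product]
  exact Finset.sum_congr rfl fun x _ => (Finset.card_filter _ _).symm

-- bad rows lemma
lemma bad_rows_lt {M N : ℕ} {T : Type*} [DecidableEq T] {ε : ℝ} (hε : 0 < ε)
    (A : Fin M → Fin N → T) (R0 : Finset (Fin M)) (Sj Yj : Finset (Fin N))
    (hYsub : Yj ⊆ Sj) (c : T) (ρ0 : ℝ)
    (hreg : IsRegularBlock2 ε A R0 Sj)
    (hdens : blockDensity2 A R0 Sj c = ρ0)
    (hY : ε * (Sj.card : ℝ) ≤ (Yj.card : ℝ)) (hYpos : 0 < Yj.card)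
    (hR0 : 0 < R0.card) :
    ((R0.filter fun x => ((Yj.filter fun y => A x y = c).card : ℝ) < (ρ0 - ε) * Yj.card).card : ℝ)
      < ε * R0.card := by
  by_contra hcon
  push_neg at hcon
  set Bad := R0.filter fun x => ((Yj.filter fun y => A x y = c).card : ℝ) < (ρ0 - ε) * Yj.card
    with hBadDef
  have hBadsub : Bad ⊆ R0 := Finset.filter_subset _ _
  have hBadpos : 0 < (Bad.card : ℝ) :=
    lt_of_lt_of_le (by positivity) hcon
  have hreg' := hreg c Bad Yj hBadsub hYsub hcon hY
  rw [hdens] at hreg'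
  have hge : ρ0 - ε ≤ blockDensity2 A Bad Yj c := by
    have := abs_le.mp hreg'
    linarith [this.1]
  have hW : (blockWeight2 A Bad Yj c : ℝ) < (Bad.card : ℝ) * ((ρ0 - ε) * Yj.card) := by
    rw [blockWeight2_eq_sum]
    push_cast
    have hne : Bad.Nonempty := Finset.card_pos.mp (by exact_mod_cast hBadpos)
    calc (∑ x ∈ Bad, ((Yj.filter fun y => A x y = c).card : ℝ))
        < ∑ _x ∈ Bad, (ρ0 - ε) * Yj.card := by
          apply Finset.sum_lt_sum_of_nonempty hne
          intro x hx
          exact (Finset.mem_filter.mp hx).2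
      _ = (Bad.card : ℝ) * ((ρ0 - ε) * Yj.card) := by
          rw [Finset.sum_const, nsmul_eq_mul]
  have hlt : blockDensity2 A Bad Yj c < ρ0 - ε := by
    unfold blockDensity2
    rw [div_lt_iff₀ (by positivity)]
    calc (blockWeight2 A Bad Yj c : ℝ) < (Bad.card : ℝ) * ((ρ0 - ε) * Yj.card) := hW
      _ = (ρ0 - ε) * ((Bad.card : ℝ) * Yj.card) := by ring
  linarith

lemma sum_piFinset_cons {γ β : Type*} [AddCommMonoid β] {t : ℕ}
    (R : Fin (t+1) → Finset γ) (f : (Fin (t+1) → γ) → β) :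
    ∑ r ∈ Fintype.piFinset R, f r
      = ∑ x ∈ R 0, ∑ r' ∈ Fintype.piFinset (fun i => R i.succ), f (Fin.cons x r') := by
  have h : Fintype.piFinset R
      = (R 0 ×ˢ Fintype.piFinset (fun i => R (Fin.succ i))).map
          (Fin.consEquiv fun _ => γ).toEmbedding := by
    have := Finset.filter_piFinset_eq_map_consEquiv R (fun _ => True)
    simp at this; exact this
  rw [h, Finset.sum_map, Finset.sum_product]
  simp [Fin.consEquiv]

lemma key_counting {M N : ℕ} {T : Type*} [DecidableEq T] (A : Fin M → Fin N → T) {s : ℕ}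
    (S : Fin s → Finset (Fin N)) (ε β : ℝ) (hε : 0 < ε) (hβ0 : 0 < β) (hβ1 : β ≤ 1)
    (hsε : (s : ℝ) * ε ≤ 1) :
    ∀ (t : ℕ) (R : Fin t → Finset (Fin M)) (C : Fin t → Fin s → T) (ρ : Fin t → Fin s → ℝ)
      (Y : Fin s → Finset (Fin N)),
      (∀ j, Y j ⊆ S j) → (∀ i, 0 < (R i).card) →
      (∀ i j, IsRegularBlock2 ε A (R i) (S j)) →
      (∀ i j, blockDensity2 A (R i) (S j) (C i j) = ρ i j) →
      (∀ i j, β ≤ ρ i j - ε) →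
      (∀ j, ε * ((S j).card : ℝ) ≤ β ^ t * ((Y j).card : ℝ)) →
      (∀ j, 0 < (S j).card) →
      (1 - s * ε) ^ t * (∏ i, ((R i).card : ℝ)) *
          ∏ j, ((∏ i, (ρ i j - ε)) * ((Y j).card : ℝ))
        ≤ ∑ r ∈ Fintype.piFinset R,
            ∏ j, (((Y j).filter fun y => ∀ i, A (r i) y = C i j).card : ℝ) := by
  intro t
  induction t with
  | zero =>
    intro R C ρ Y hYsub hR hreg hdens hβρ hY hS
    have hpi : Fintype.piFinset R = Finset.univ := by
      ext f
      simp only [Fintype.mem_piFinset, Finset.mem_univ, iff_true]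
      exact fun i => i.elim0
    rw [hpi]
    have huniv : (Finset.univ : Finset (Fin 0 → Fin M)) = {fun i => i.elim0} := by
      apply Finset.eq_singleton_iff_unique_mem.mpr
      exact ⟨Finset.mem_univ _, fun x _ => funext fun i => i.elim0⟩
    rw [huniv, Finset.sum_singleton]
    have : ∀ j, ((Y j).filter fun y => ∀ i : Fin 0, A (i.elim0) y = C i j) = Y j := by
      intro j
      apply Finset.filter_true_of_mem
      exact fun y _ => fun i => i.elim0
    simp only [pow_zero, Finset.univ_eq_empty, Finset.prod_empty, one_mul]
    apply le_of_eq
    exact Finset.prod_congr rfl fun j _ => by rw [this j]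
  | succ t ih =>
    intro R C ρ Y hYsub hR hreg hdens hβρ hY hS
    -- basic positivity facts
    have h1sε : (0:ℝ) ≤ 1 - s * ε := by linarith
    have hρε : ∀ i j, (0:ℝ) < ρ i j - ε := fun i j => lt_of_lt_of_le hβ0 (hβρ i j)
    have hYcard : ∀ j, (0:ℝ) < ((Y j).card : ℝ) := by
      intro j
      by_contra h
      push_neg at h
      have h0 : ((Y j).card : ℝ) = 0 := le_antisymm h (by positivity)
      have := hY j
      rw [h0, mul_zero] at this
      have : ε * ((S j).card : ℝ) > 0 := by
        have := hS j; positivity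
      linarith [hY j, h0, (by rw [h0, mul_zero] : β ^ (t+1) * ((Y j).card:ℝ) = 0)]
    have hYS : ∀ j, ε * ((S j).card : ℝ) ≤ ((Y j).card : ℝ) := by
      intro j
      calc ε * ((S j).card : ℝ) ≤ β ^ (t+1) * ((Y j).card : ℝ) := hY j
        _ ≤ 1 * ((Y j).card : ℝ) := by
            apply mul_le_mul_of_nonneg_right _ (le_of_lt (hYcard j))
            exact pow_le_one₀ (le_of_lt hβ0) hβ1
        _ = ((Y j).card : ℝ) := one_mul _
    -- the candidate sets after choosing x for row class 0
    set Z : Fin s → Fin M → Finset (Fin N) :=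
      fun j x => (Y j).filter fun y => A x y = C 0 j with hZdef
    set Good : Finset (Fin M) :=
      (R 0).filter fun x => ∀ j, (ρ 0 j - ε) * ((Y j).card : ℝ) ≤ ((Z j x).card : ℝ)
      with hGoodDef
    -- bad rows are few
    have hbad : ∀ j, (((R 0).filter fun x =>
        ((Z j x).card : ℝ) < (ρ 0 j - ε) * ((Y j).card : ℝ)).card : ℝ) < ε * ((R 0).card : ℝ) := by
      intro j
      exact bad_rows_lt hε A (R 0) (S j) (Y j) (hYsub j) (C 0 j) (ρ 0 j)
        (hreg 0 j) (hdens 0 j) (hYS j) (by exact_mod_cast hYcard j) (hR 0)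
    have hGoodcard : (1 - s * ε) * ((R 0).card : ℝ) ≤ (Good.card : ℝ) := by
      have hsub : (R 0) \ Good ⊆ Finset.univ.biUnion fun j =>
          (R 0).filter fun x => ((Z j x).card : ℝ) < (ρ 0 j - ε) * ((Y j).card : ℝ) := by
        intro x hx
        rw [Finset.mem_sdiff] at hx
        obtain ⟨hx1, hx2⟩ := hx
        rw [hGoodDef, Finset.mem_filter] at hx2
        push_neg at hx2
        obtain ⟨j, hj⟩ := hx2 hx1
        exact Finset.mem_biUnion.mpr ⟨j, Finset.mem_univ _, Finset.mem_filter.mpr ⟨hx1, hj⟩⟩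
      have hcard1 : (((R 0) \ Good).card : ℝ) ≤ (s : ℝ) * (ε * ((R 0).card : ℝ)) := by
        calc (((R 0) \ Good).card : ℝ)
            ≤ ((Finset.univ.biUnion fun j => (R 0).filter fun x =>
                ((Z j x).card : ℝ) < (ρ 0 j - ε) * ((Y j).card : ℝ)).card : ℝ) := by
              exact_mod_cast Finset.card_le_card hsub
          _ ≤ ∑ j : Fin s, (((R 0).filter fun x =>
                ((Z j x).card : ℝ) < (ρ 0 j - ε) * ((Y j).card : ℝ)).card : ℝ) := by
              exact_mod_cast Finset.card_biUnion_le
          _ ≤ ∑ _j : Fin s, ε * ((R 0).card : ℝ) :=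
              Finset.sum_le_sum fun j _ => le_of_lt (hbad j)
          _ = (s : ℝ) * (ε * ((R 0).card : ℝ)) := by
              rw [Finset.sum_const, nsmul_eq_mul]; simp
      have hGsub : Good ⊆ R 0 := Finset.filter_subset _ _
      have : (((R 0) \ Good).card : ℝ) = ((R 0).card : ℝ) - (Good.card : ℝ) := by
        rw [Finset.card_sdiff, Finset.inter_eq_left.mpr hGsub]
        exact_mod_cast Nat.cast_sub (Finset.card_le_card hGsub)
      nlinarith [this, hcard1]
    -- rewrite the filters after fixing x
    have hfilter : ∀ (x : Fin M) (r' : Fin t → Fin M) (j : Fin s),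
        ((Y j).filter fun y => ∀ i : Fin (t+1), A ((Fin.cons x r' : Fin (t+1) → Fin M) i) y = C i j)
          = (Z j x).filter fun y => ∀ i : Fin t, A (r' i) y = C i.succ j := by
      intro x r' j
      rw [hZdef]
      rw [Finset.filter_filter]
      apply Finset.filter_congr
      intro y _
      rw [Fin.forall_fin_succ]
      simp [Fin.cons_zero, Fin.cons_succ]
    set K : ℝ := (1 - s * ε) ^ t * (∏ i : Fin t, ((R i.succ).card : ℝ)) *
        ∏ j, ((∏ i : Fin t, (ρ i.succ j - ε)) * ((ρ 0 j - ε) * ((Y j).card : ℝ))) with hKdef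
    have hK0 : 0 ≤ K := by
      apply mul_nonneg (mul_nonneg (pow_nonneg h1sε t) (Finset.prod_nonneg fun i _ => by positivity))
      apply Finset.prod_nonneg
      intro j _
      apply mul_nonneg (Finset.prod_nonneg fun i _ => le_of_lt (hρε i.succ j))
      exact mul_nonneg (le_of_lt (hρε 0 j)) (Nat.cast_nonneg _)
    have hFx : ∀ x ∈ Good,
        K ≤ ∑ r' ∈ Fintype.piFinset (fun i => R i.succ),
              ∏ j, (((Y j).filter fun y =>
                ∀ i : Fin (t+1), A ((Fin.cons x r' : Fin (t+1) → Fin M) i) y = C i j).card : ℝ) := by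
      intro x hx
      rw [hGoodDef, Finset.mem_filter] at hx
      obtain ⟨hxR, hxG⟩ := hx
      have hY' : ∀ j, ε * ((S j).card : ℝ) ≤ β ^ t * (((Z j x).card : ℝ)) := by
        intro j
        calc ε * ((S j).card : ℝ) ≤ β ^ (t+1) * ((Y j).card : ℝ) := hY j
          _ = β ^ t * (β * ((Y j).card : ℝ)) := by ring
          _ ≤ β ^ t * ((ρ 0 j - ε) * ((Y j).card : ℝ)) := by
              apply mul_le_mul_of_nonneg_left _ (pow_nonneg (le_of_lt hβ0) t)
              exact mul_le_mul_of_nonneg_right (hβρ 0 j) (le_of_lt (hYcard j))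
          _ ≤ β ^ t * ((Z j x).card : ℝ) := by
              exact mul_le_mul_of_nonneg_left (hxG j) (pow_nonneg (le_of_lt hβ0) t)
      have ihx := ih (fun i => R i.succ) (fun i j => C i.succ j) (fun i j => ρ i.succ j)
        (fun j => Z j x)
        (fun j => subset_trans (Finset.filter_subset _ _) (hYsub j))
        (fun i => hR i.succ) (fun i j => hreg i.succ j) (fun i j => hdens i.succ j)
        (fun i j => hβρ i.succ j) hY' hS
      calc K ≤ (1 - s * ε) ^ t * (∏ i : Fin t, ((R i.succ).card : ℝ)) *
            ∏ j, ((∏ i : Fin t, (ρ i.succ j - ε)) * (((Z j x).card : ℝ))) := by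
            rw [hKdef]
            apply mul_le_mul_of_nonneg_left _
              (mul_nonneg (pow_nonneg h1sε t) (Finset.prod_nonneg fun i _ => by positivity))
            apply Finset.prod_le_prod
            · intro j _
              apply mul_nonneg (Finset.prod_nonneg fun i _ => le_of_lt (hρε i.succ j))
              exact mul_nonneg (le_of_lt (hρε 0 j)) (Nat.cast_nonneg _)
            · intro j _
              exact mul_le_mul_of_nonneg_left (hxG j)
                (Finset.prod_nonneg fun i _ => le_of_lt (hρε i.succ j))
        _ ≤ ∑ r' ∈ Fintype.piFinset (fun i => R i.succ),
              ∏ j, (((Z j x).filter fun y =>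
                ∀ i : Fin t, A (r' i) y = C i.succ j).card : ℝ) := ihx
        _ = ∑ r' ∈ Fintype.piFinset (fun i => R i.succ),
              ∏ j, (((Y j).filter fun y =>
                ∀ i : Fin (t+1), A ((Fin.cons x r' : Fin (t+1) → Fin M) i) y = C i j).card : ℝ) := by
            apply Finset.sum_congr rfl
            intro r' _
            apply Finset.prod_congr rfl
            intro j _
            rw [hfilter x r' j]
    -- put everything together
    rw [sum_piFinset_cons]
    have hFnonneg : ∀ x : Fin M,
        (0:ℝ) ≤ ∑ r' ∈ Fintype.piFinset (fun i => R i.succ),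
              ∏ j, (((Y j).filter fun y =>
                ∀ i : Fin (t+1), A ((Fin.cons x r' : Fin (t+1) → Fin M) i) y = C i j).card : ℝ) := by
      intro x
      apply Finset.sum_nonneg
      intro r' _
      exact Finset.prod_nonneg fun j _ => Nat.cast_nonneg _
    have hGsub : Good ⊆ R 0 := Finset.filter_subset _ _
    calc (1 - s * ε) ^ (t+1) * (∏ i : Fin (t+1), ((R i).card : ℝ)) *
          ∏ j, ((∏ i : Fin (t+1), (ρ i j - ε)) * ((Y j).card : ℝ))
        = ((1 - s * ε) * ((R 0).card : ℝ)) * K := by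
          rw [hKdef, Fin.prod_univ_succ, pow_succ]
          rw [show (∏ j, ((∏ i : Fin (t+1), (ρ i j - ε)) * ((Y j).card : ℝ)))
              = ∏ j, ((∏ i : Fin t, (ρ i.succ j - ε)) * ((ρ 0 j - ε) * ((Y j).card : ℝ)))
            from Finset.prod_congr rfl fun j _ => by rw [Fin.prod_univ_succ]; ring]
          ring
      _ ≤ (Good.card : ℝ) * K := mul_le_mul_of_nonneg_right hGoodcard hK0
      _ ≤ ∑ x ∈ Good, ∑ r' ∈ Fintype.piFinset (fun i => R i.succ),
              ∏ j, (((Y j).filter fun y =>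
                ∀ i : Fin (t+1), A ((Fin.cons x r' : Fin (t+1) → Fin M) i) y = C i j).card : ℝ) := by
          have := Finset.card_nsmul_le_sum Good _ K hFx
          rwa [nsmul_eq_mul] at this
      _ ≤ ∑ x ∈ R 0, ∑ r' ∈ Fintype.piFinset (fun i => R i.succ),
              ∏ j, (((Y j).filter fun y =>
                ∀ i : Fin (t+1), A ((Fin.cons x r' : Fin (t+1) → Fin M) i) y = C i j).card : ℝ) :=
          Finset.sum_le_sum_of_subset_of_nonneg hGsub fun x _ _ => hFnonneg x

lemma count_eq {M N t s : ℕ} {T : Type*} [DecidableEq T] (A : Fin M → Fin N → T)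
    (R : Fin t → Finset (Fin M)) (S : Fin s → Finset (Fin N)) (C : Fin t → Fin s → T) :
    ((Finset.univ.filter fun rs : (Fin t → Fin M) × (Fin s → Fin N) =>
        (∀ i, rs.1 i ∈ R i) ∧ (∀ j, rs.2 j ∈ S j) ∧
        ∀ i j, A (rs.1 i) (rs.2 j) = C i j).card)
      = ∑ r ∈ Fintype.piFinset R,
          ∏ j, ((S j).filter fun y => ∀ i, A (r i) y = C i j).card := by
  rw [Finset.card_filter, ← Finset.univ_product_univ, Finset.sum_product]
  have key : ∀ r : Fin t → Fin M,
      (∑ s' : Fin s → Fin N, if (∀ i, r i ∈ R i) ∧ (∀ j, s' j ∈ S j) ∧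
          ∀ i j, A (r i) (s' j) = C i j then 1 else 0)
        = if r ∈ Fintype.piFinset R then
            ∏ j, ((S j).filter fun y => ∀ i, A (r i) y = C i j).card else 0 := by
    intro r
    by_cases hr : ∀ i, r i ∈ R i
    · rw [if_pos (Fintype.mem_piFinset.mpr hr)]
      have h1 : (∑ s' : Fin s → Fin N, if (∀ i, r i ∈ R i) ∧ (∀ j, s' j ∈ S j) ∧
            ∀ i j, A (r i) (s' j) = C i j then 1 else 0)
          = (Finset.univ.filter fun s' : Fin s → Fin N =>
              ∀ j, s' j ∈ (S j).filter fun y => ∀ i, A (r i) y = C i j).card := by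
        rw [Finset.card_filter]
        apply Finset.sum_congr rfl
        intro s' _
        congr 1
        apply propext
        constructor
        · rintro ⟨-, h2, h3⟩ j
          exact Finset.mem_filter.mpr ⟨h2 j, fun i => h3 i j⟩
        · intro h
          exact ⟨hr, fun j => (Finset.mem_filter.mp (h j)).1,
            fun i j => (Finset.mem_filter.mp (h j)).2 i⟩
      rw [h1]
      have h2 : (Finset.univ.filter fun s' : Fin s → Fin N =>
            ∀ j, s' j ∈ (S j).filter fun y => ∀ i, A (r i) y = C i j)
          = Fintype.piFinset fun j => (S j).filter fun y => ∀ i, A (r i) y = C i j := by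
        ext s'
        simp [Fintype.mem_piFinset]
      rw [h2, Fintype.card_piFinset]
    · rw [if_neg (by simpa [Fintype.mem_piFinset] using hr)]
      apply Finset.sum_eq_zero
      intro s' _
      rw [if_neg]
      tauto
  rw [Finset.sum_congr rfl fun r _ => key r, Finset.sum_ite_mem, Finset.univ_inter]

set_option maxHeartbeats 1000000 in
/-- **Counting lemma for 2-dimensional matrices.**  For any `δ > 0`, integers
`t, s ≥ 1`, finite alphabet, `t × s` matrix `C` and reals `ρ i j ∈ (0,1]`, there is
`ε > 0` such that the following holds.  Let `A` be a 2-dimensional matrix whose rows are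
partitioned into sets `R 1, …, R t` with `|R i| = m i` and whose columns are partitioned
into sets `S 1, …, S s` with `|S j| = n' j`, such that every block `R i × S j` is
`ε`-regular with density of the symbol `C i j` equal to `ρ i j`.  Then the number of
tuples `(r, s')` with `r i ∈ R i`, `s' j ∈ S j` and `A (r i) (s' j) = C i j` for all
`i, j` is at least `(1 − δ)·∏ᵢ m i·∏ⱼ n' j·∏ᵢ∏ⱼ ρ i j`. -/
theorem counting_lemma_two_dims (δ : ℝ) (hδ : 0 < δ) (t s : ℕ) (ht : 1 ≤ t) (hs : 1 ≤ s)
    (T : Type) [Fintype T] [DecidableEq T]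
    (C : Fin t → Fin s → T) (ρ : Fin t → Fin s → ℝ)
    (hρ0 : ∀ i j, 0 < ρ i j) (hρ1 : ∀ i j, ρ i j ≤ 1) :
    ∃ ε : ℝ, 0 < ε ∧
      ∀ (M N : ℕ) (A : Fin M → Fin N → T)
        (R : Fin t → Finset (Fin M)) (S : Fin s → Finset (Fin N))
        (m : Fin t → ℕ) (n' : Fin s → ℕ),
        (∀ i, (R i).card = m i) → (∀ j, (S j).card = n' j) →
        (∀ i i', i ≠ i' → Disjoint (R i) (R i')) → (∀ x : Fin M, ∃ i, x ∈ R i) →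
        (∀ j j', j ≠ j' → Disjoint (S j) (S j')) → (∀ y : Fin N, ∃ j, y ∈ S j) →
        (∀ i j, IsRegularBlock2 ε A (R i) (S j) ∧ blockDensity2 A (R i) (S j) (C i j) = ρ i j) →
        (1 - δ) * (∏ i, (m i : ℝ)) * (∏ j, (n' j : ℝ)) * (∏ i, ∏ j, ρ i j) ≤
          ((Finset.univ.filter fun rs : (Fin t → Fin M) × (Fin s → Fin N) =>
              (∀ i, rs.1 i ∈ R i) ∧ (∀ j, rs.2 j ∈ S j) ∧
              ∀ i j, A (rs.1 i) (rs.2 j) = C i j).card : ℝ) := by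
  have hne : (Finset.univ : Finset (Fin t × Fin s)).Nonempty :=
    ⟨(⟨0, ht⟩, ⟨0, hs⟩), Finset.mem_univ _⟩
  set ρmin : ℝ := Finset.univ.inf' hne fun p => ρ p.1 p.2 with hρmindef
  have hρminpos : 0 < ρmin := by
    rw [hρmindef, Finset.lt_inf'_iff]
    exact fun p _ => hρ0 p.1 p.2
  have hρminle : ∀ i j, ρmin ≤ ρ i j := fun i j =>
    Finset.inf'_le _ (Finset.mem_univ (i, j))
  have hρmin1 : ρmin ≤ 1 := le_trans (hρminle ⟨0, ht⟩ ⟨0, hs⟩) (hρ1 _ _)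
  set β : ℝ := ρmin / 2 with hβdef
  have hβ0 : 0 < β := by positivity
  have hβ1 : β ≤ 1 := by rw [hβdef]; linarith
  set δ' : ℝ := min δ 1 with hδ'def
  have hδ'0 : 0 < δ' := lt_min hδ zero_lt_one
  have hδ'1 : δ' ≤ 1 := min_le_right _ _
  have hδ'δ : δ' ≤ δ := min_le_left _ _
  have hts : (0:ℝ) < (t : ℝ) * s := by
    have ht' : (0:ℝ) < (t:ℝ) := by exact_mod_cast ht
    have hs' : (0:ℝ) < (s:ℝ) := by exact_mod_cast hs
    positivity
  set ε : ℝ := min (β ^ t) (δ' * β / ((t : ℝ) * s * (2 * β + 1))) with hεdef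
  have hε : 0 < ε := by
    apply lt_min (by positivity)
    exact div_pos (mul_pos hδ'0 hβ0) (mul_pos hts (by linarith))
  have hεβt : ε ≤ β ^ t := min_le_left _ _
  have hεβ : ε ≤ β := le_trans hεβt (by
    calc β ^ t ≤ β ^ 1 := pow_le_pow_of_le_one (le_of_lt hβ0) hβ1 ht
      _ = β := pow_one β)
  have hεδ : (t : ℝ) * s * ε ≤ δ' * β / (2 * β + 1) := by
    have h : ε ≤ δ' * β / ((t : ℝ) * s * (2 * β + 1)) := min_le_right _ _
    have h1 : (t:ℝ) * s ≠ 0 := ne_of_gt hts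
    have h2 : (2 * β + 1) ≠ 0 := by positivity
    calc (t:ℝ) * s * ε ≤ (t:ℝ) * s * (δ' * β / ((t : ℝ) * s * (2 * β + 1))) :=
          mul_le_mul_of_nonneg_left h (le_of_lt hts)
      _ = δ' * β / (2 * β + 1) := by field_simp
  -- abbreviations
  set a : ℝ := (t : ℝ) * s * ε with hadef
  have ha0 : 0 ≤ a := by positivity
  have hρβ : ρmin = 2 * β := by rw [hβdef]; ring
  have h1 : a * (2 * β + 1) ≤ δ' * β := by
    rw [← le_div_iff₀ (by positivity)]
    exact hεδ
  have hab : a + a / ρmin ≤ δ' := by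
    rw [hρβ]
    rw [show a + a / (2 * β) = (a * (2 * β + 1)) / (2 * β) by field_simp]
    rw [div_le_iff₀ (by positivity)]
    nlinarith [h1, hβ0, hδ'0]
  have haδ : a ≤ δ' := by
    have : 0 ≤ a / ρmin := by positivity
    linarith
  have hsε : (s : ℝ) * ε ≤ 1 := by
    have hst : (s:ℝ) * ε ≤ a := by
      rw [hadef]
      have ht' : (1:ℝ) ≤ (t:ℝ) := by exact_mod_cast ht
      nlinarith [hε.le, (by positivity : (0:ℝ) ≤ (s:ℝ))]
    linarith
  refine ⟨ε, hε, ?_⟩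
  intro M N A R S m n' hm hn _ _ _ _ hblocks
  have hreg : ∀ i j, IsRegularBlock2 ε A (R i) (S j) := fun i j => (hblocks i j).1
  have hdens : ∀ i j, blockDensity2 A (R i) (S j) (C i j) = ρ i j := fun i j => (hblocks i j).2
  have hcards : ∀ i j, 0 < (R i).card ∧ 0 < (S j).card := by
    intro i j
    have hd := hdens i j
    constructor
    · rcases Nat.eq_zero_or_pos (R i).card with h | h
      · exfalso
        rw [blockDensity2, h] at hd
        simp at hd
        linarith [hρ0 i j]
      · exact h
    · rcases Nat.eq_zero_or_pos (S j).card with h | h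
      · exfalso
        rw [blockDensity2, h] at hd
        simp at hd
        linarith [hρ0 i j]
      · exact h
  have hβρ : ∀ i j, β ≤ ρ i j - ε := by
    intro i j
    have := hρminle i j
    rw [hβdef] at *
    linarith [hεβ]
  -- the key counting bound
  have hkey := key_counting A S ε β hε hβ0 hβ1 hsε t R C ρ S
    (fun j => subset_rfl) (fun i => (hcards i ⟨0, hs⟩).1) hreg hdens hβρ
    (fun j => mul_le_mul_of_nonneg_right hεβt (Nat.cast_nonneg _))
    (fun j => (hcards ⟨0, ht⟩ j).2)
  -- the numeric factor inequality
  set P : ℝ := ∏ i, ∏ j, ρ i j with hPdef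
  set Q : ℝ := ∏ i, ∏ j, (ρ i j - ε) with hQdef
  have hP0 : 0 ≤ P :=
    Finset.prod_nonneg fun i _ => Finset.prod_nonneg fun j _ => (hρ0 i j).le
  have hQ0 : 0 ≤ Q :=
    Finset.prod_nonneg fun i _ => Finset.prod_nonneg fun j _ => by
      have := hβρ i j; linarith [hβ0]
  set c : ℝ := 1 - ε / ρmin with hcdef
  have hεdivρ : ε / ρmin ≤ 1 := by
    rw [div_le_one hρminpos]
    rw [hρβ]; linarith [hεβ, hβ0]
  have hc0 : 0 ≤ c := by rw [hcdef]; linarith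
  have h2a : (∏ i, ∏ j, (ρ i j * c)) = P * c ^ (t * s) := by
    calc (∏ i, ∏ j, (ρ i j * c)) = ∏ i, ((∏ j, ρ i j) * c ^ s) := by
          apply Finset.prod_congr rfl
          intro i _
          rw [Finset.prod_mul_distrib, Finset.prod_const, Finset.card_univ, Fintype.card_fin]
      _ = (∏ i, ∏ j, ρ i j) * (c ^ s) ^ t := by
          rw [Finset.prod_mul_distrib, Finset.prod_const, Finset.card_univ, Fintype.card_fin]
      _ = P * c ^ (t * s) := by rw [← pow_mul, Nat.mul_comm]
  have h2 : P * c ^ (t * s) ≤ Q := by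
    rw [← h2a, hQdef]
    apply Finset.prod_le_prod
    · intro i _
      exact Finset.prod_nonneg fun j _ => mul_nonneg (hρ0 i j).le hc0
    · intro i _
      apply Finset.prod_le_prod
      · intro j _; exact mul_nonneg (hρ0 i j).le hc0
      · intro j _
        have hx : ε ≤ ρ i j * (ε / ρmin) := by
          have h' := mul_le_mul_of_nonneg_right (hρminle i j) (by positivity : (0:ℝ) ≤ ε / ρmin)
          rwa [mul_div_cancel₀ ε (ne_of_gt hρminpos)] at h'
        rw [hcdef]
        have hexp : ρ i j * (1 - ε / ρmin) = ρ i j - ρ i j * (ε / ρmin) := by ring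
        linarith [hx, hexp]
  have h3 : 1 - ((t * s : ℕ) : ℝ) * (ε / ρmin) ≤ c ^ (t * s) := by
    have hnn : (0:ℝ) ≤ ε / ρmin := by positivity
    have := one_add_mul_le_pow (a := -(ε / ρmin)) (by linarith) (t * s)
    rw [hcdef]
    calc 1 - ((t * s : ℕ) : ℝ) * (ε / ρmin) = 1 + (t * s : ℕ) * (-(ε / ρmin)) := by ring
      _ ≤ (1 + -(ε / ρmin)) ^ (t * s) := this
      _ = (1 - ε / ρmin) ^ (t * s) := by rw [show (1:ℝ) + -(ε / ρmin) = 1 - ε / ρmin from by ring]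
  have h1p : 1 - (t : ℝ) * ((s : ℝ) * ε) ≤ (1 - (s : ℝ) * ε) ^ t := by
    have hnn : (0:ℝ) ≤ (s:ℝ) * ε := by positivity
    have := one_add_mul_le_pow (a := -((s : ℝ) * ε)) (by linarith) t
    calc 1 - (t : ℝ) * ((s : ℝ) * ε) = 1 + (t : ℕ) * (-((s:ℝ) * ε)) := by push_cast; ring
      _ ≤ (1 + -((s:ℝ) * ε)) ^ t := this
      _ = (1 - (s:ℝ) * ε) ^ t := by rw [show (1:ℝ) + -((s:ℝ) * ε) = 1 - (s:ℝ) * ε from by ring]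
  set b : ℝ := (t : ℝ) * s * (ε / ρmin) with hbdef
  have hb0 : 0 ≤ b := by positivity
  have habδ : a + b ≤ δ' := by
    have : b = a / ρmin := by rw [hbdef, hadef]; field_simp
    rw [this]; exact hab
  have ha1 : 1 - a ≥ 0 := by
    have : a ≤ δ' := haδ
    linarith [hδ'1]
  have hfac : (1 - δ) * P ≤ (1 - (s:ℝ) * ε) ^ t * Q := by
    calc (1 - δ) * P ≤ ((1 - a) * (1 - b)) * P := by
          apply mul_le_mul_of_nonneg_right _ hP0
          nlinarith [ha0, hb0, habδ, hδ'δ]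
      _ ≤ ((1 - a) * c ^ (t * s)) * P := by
          apply mul_le_mul_of_nonneg_right _ hP0
          apply mul_le_mul_of_nonneg_left _ ha1
          calc 1 - b = 1 - ((t * s : ℕ) : ℝ) * (ε / ρmin) := by rw [hbdef]; push_cast; ring
            _ ≤ c ^ (t * s) := h3
      _ = (1 - a) * (P * c ^ (t * s)) := by ring
      _ ≤ (1 - a) * Q := mul_le_mul_of_nonneg_left h2 ha1
      _ ≤ (1 - (s:ℝ) * ε) ^ t * Q := by
          apply mul_le_mul_of_nonneg_right _ hQ0
          calc 1 - a = 1 - (t:ℝ) * ((s:ℝ) * ε) := by rw [hadef]; ring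
            _ ≤ (1 - (s:ℝ) * ε) ^ t := h1p
  -- rewrite the count
  rw [count_eq A R S C]
  push_cast
  have hmn0 : 0 ≤ (∏ i, (m i : ℝ)) * (∏ j, (n' j : ℝ)) := by positivity
  calc (1 - δ) * (∏ i, (m i : ℝ)) * (∏ j, (n' j : ℝ)) * P
      = ((∏ i, (m i : ℝ)) * (∏ j, (n' j : ℝ))) * ((1 - δ) * P) := by ring
    _ ≤ ((∏ i, (m i : ℝ)) * (∏ j, (n' j : ℝ))) * ((1 - (s:ℝ) * ε) ^ t * Q) :=
        mul_le_mul_of_nonneg_left hfac hmn0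
    _ = (1 - (s:ℝ) * ε) ^ t * (∏ i, ((R i).card : ℝ)) *
          ∏ j, ((∏ i, (ρ i j - ε)) * ((S j).card : ℝ)) := by
        rw [Finset.prod_mul_distrib]
        rw [show (∏ j : Fin s, ∏ i : Fin t, (ρ i j - ε)) = Q from by rw [hQdef]; exact Finset.prod_comm]
        rw [show (∏ i, ((R i).card : ℝ)) = ∏ i, (m i : ℝ) from
          Finset.prod_congr rfl fun i _ => by rw [hm i]]
        rw [show (∏ j, ((S j).card : ℝ)) = ∏ j, (n' j : ℝ) from
          Finset.prod_congr rfl fun j _ => by rw [hn j]]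
        ring
    _ ≤ ∑ r ∈ Fintype.piFinset R,
          ∏ j, (((S j).filter fun y => ∀ i, A (r i) y = C i j).card : ℝ) := hkey
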